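/- Let Φ ∈ ℝ^{M×N} have restricted isometry constant δ := δ_{K'+K} < 1 of order K'+K, let x ∈ ℝ^N be K-sparse, y = Φx, let Λ' ⊆ {1,…,N} with |Λ'| = K', and let x' be a least-squares estimate of y on Λ'. Then ‖x' − x‖² ≤ ‖(x' − x)_{Λ̄'}‖² / (1 − δ²). -/
import Mathlib


open Finset

noncomputable section

/-- The Euclidean (ℓ₂) norm of a vector in `Fin n → ℝ`. -/
def l2norm {n : ℕ} (v : Fin n → ℝ) : ℝ := Real.sqrt (∑ i, (v i) ^ 2)

/-- The sparsity `‖v‖₀` of a vector: the number of its nonzero entries. -/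
def sparsity {n : ℕ} (v : Fin n → ℝ) : ℕ := (Finset.univ.filter fun i => v i ≠ 0).card

/-- The support of a vector, as a `Finset`. -/
def suppF {n : ℕ} (v : Fin n → ℝ) : Finset (Fin n) := Finset.univ.filter fun i => v i ≠ 0

/-- `restr v S` is the vector agreeing with `v` on `S` and zero outside `S`. -/
def restr {n : ℕ} (v : Fin n → ℝ) (S : Finset (Fin n)) : Fin n → ℝ :=
  fun i => if i ∈ S then v i else 0

/-- `Φ` has restricted isometry constant `δ < 1` of order `s`:
`(1-δ)‖z‖² ≤ ‖Φz‖² ≤ (1+δ)‖z‖²` for every `s`-sparse `z`. -/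
def HasRIC {M N : ℕ} (Φ : Matrix (Fin M) (Fin N) ℝ) (s : ℕ) (δ : ℝ) : Prop :=
  δ < 1 ∧ ∀ z : Fin N → ℝ, sparsity z ≤ s →
    (1 - δ) * (l2norm z) ^ 2 ≤ (l2norm (Φ.mulVec z)) ^ 2 ∧
      (l2norm (Φ.mulVec z)) ^ 2 ≤ (1 + δ) * (l2norm z) ^ 2

/-- `Λ` is a top-`k` support of `v`: `|Λ| = k` and every entry of `v` inside `Λ`
dominates (in magnitude) every entry outside `Λ`. -/
def IsTopSupport {n : ℕ} (v : Fin n → ℝ) (k : ℕ) (Λ : Finset (Fin n)) : Prop :=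
  Λ.card = k ∧ ∀ i ∈ Λ, ∀ j ∉ Λ, |v j| ≤ |v i|

/-- `x'` is a least-squares estimate of `y` on the support `Λ`. -/
def IsLSE {M N : ℕ} (Φ : Matrix (Fin M) (Fin N) ℝ) (y : Fin M → ℝ)
    (Λ : Finset (Fin N)) (x' : Fin N → ℝ) : Prop :=
  suppF x' ⊆ Λ ∧ ∀ z : Fin N → ℝ, suppF z ⊆ Λ →
    l2norm (y - Φ.mulVec x') ≤ l2norm (y - Φ.mulVec z)

lemma l2norm_sq {n : ℕ} (v : Fin n → ℝ) : (l2norm v) ^ 2 = ∑ i, (v i) ^ 2 := by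
  rw [l2norm, Real.sq_sqrt]; positivity

lemma sum_sq_add' {n : ℕ} (u v : Fin n → ℝ) :
    ∑ i, (u i + v i) ^ 2 = ∑ i, (u i)^2 + 2 * ∑ i, u i * v i + ∑ i, (v i)^2 := by
  rw [Finset.mul_sum, ← Finset.sum_add_distrib, ← Finset.sum_add_distrib]
  exact Finset.sum_congr rfl fun i _ => by ring

lemma sum_sq_sub' {n : ℕ} (u v : Fin n → ℝ) :
    ∑ i, (u i - v i) ^ 2 = ∑ i, (u i)^2 - 2 * ∑ i, u i * v i + ∑ i, (v i)^2 := by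
  rw [Finset.mul_sum, ← Finset.sum_sub_distrib, ← Finset.sum_add_distrib]
  exact Finset.sum_congr rfl fun i _ => by ring

lemma sparsity_le_of_zero_outside {n : ℕ} (v : Fin n → ℝ) (S : Finset (Fin n))
    (h : ∀ i, i ∉ S → v i = 0) : sparsity v ≤ S.card := by
  apply Finset.card_le_card
  intro i hi
  simp only [Finset.mem_filter, Finset.mem_univ, true_and] at hi
  by_contra hc
  exact hi (h i hc)

lemma suppF_zero_outside {n : ℕ} {v : Fin n → ℝ} {S : Finset (Fin n)}
    (h : suppF v ⊆ S) : ∀ i, i ∉ S → v i = 0 := by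
  intro i hi
  by_contra hc
  exact hi (h (by simp [suppF, hc]))


set_option maxHeartbeats 1000000 in
/-- for a least-squares estimate `x'` of `y = Φx` on a support `Λ'`
of size `K'`, one has `‖x' − x‖² ≤ ‖(x' − x)_{Λ̄'}‖² / (1 − δ²)`. -/
theorem lse_error_restrict_bound {M N : ℕ} (Φ : Matrix (Fin M) (Fin N) ℝ)
    (K K' : ℕ) (δ : ℝ) (hRIC : HasRIC Φ (K' + K) δ) (hδ0 : 0 ≤ δ)
    (x : Fin N → ℝ) (hx : sparsity x ≤ K)
    (y : Fin M → ℝ) (hy : y = Φ.mulVec x)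
    (Λ' : Finset (Fin N)) (hΛ' : Λ'.card = K')
    (x' : Fin N → ℝ) (hx' : IsLSE Φ y Λ' x') :
    (l2norm (x' - x)) ^ 2 ≤ (l2norm (restr (x' - x) Λ'ᶜ)) ^ 2 / (1 - δ ^ 2) := by
  obtain ⟨hδ1, hRIP⟩ := hRIC
  set h : Fin N → ℝ := x' - x with hh
  set g : Fin N → ℝ := restr h Λ' with hg
  set gc : Fin N → ℝ := restr h Λ'ᶜ with hgc
  -- h vanishes outside Λ' ∪ suppF x
  have hhzero : ∀ i, i ∉ Λ' ∪ suppF x → h i = 0 := by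
    intro i hi
    rw [Finset.mem_union, not_or] at hi
    have hx'i : x' i = 0 := suppF_zero_outside hx'.1 i hi.1
    have hxi : x i = 0 := by
      have := hi.2; simp only [suppF, Finset.mem_filter, Finset.mem_univ, true_and,
        not_not] at this; exact this
    simp [hh, Pi.sub_apply, hx'i, hxi]
  have hcard : (Λ' ∪ suppF x).card ≤ K' + K :=
    le_trans (Finset.card_union_le _ _) (by rw [hΛ']; exact Nat.add_le_add_left hx _)
  -- sums of squares
  set α : ℝ := ∑ i, (g i) ^ 2 with hα
  set β : ℝ := ∑ i, (h i) ^ 2 with hβ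
  set γ : ℝ := ∑ i, (gc i) ^ 2 with hγ
  have hαnn : 0 ≤ α := Finset.sum_nonneg fun i _ => sq_nonneg _
  have hβnn : 0 ≤ β := Finset.sum_nonneg fun i _ => sq_nonneg _
  have hβsplit : β = α + γ := by
    rw [hα, hβ, hγ, ← Finset.sum_add_distrib]
    refine Finset.sum_congr rfl fun i _ => ?_
    by_cases hi : i ∈ Λ'
    · simp [hg, hgc, restr, hi]
    · simp [hg, hgc, restr, hi]
  have hgh : ∑ i, g i * h i = α := by
    rw [hα]
    refine Finset.sum_congr rfl fun i _ => ?_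
    by_cases hi : i ∈ Λ' <;> simp [hg, restr, hi] <;> ring
  -- orthogonality: ⟨Φh, Φg⟩ = 0
  set A : Fin M → ℝ := Φ.mulVec h with hA
  set G : Fin M → ℝ := Φ.mulVec g with hG
  set c : ℝ := ∑ i, A i * G i with hc
  set d : ℝ := ∑ i, (G i) ^ 2 with hd
  have hdnn : 0 ≤ d := Finset.sum_nonneg fun i _ => sq_nonneg _
  have key : ∀ t : ℝ, 0 ≤ 2 * t * c + t ^ 2 * d := by
    intro t
    have hz : suppF (x' + t • g) ⊆ Λ' := by
      intro i hi
      simp only [suppF, Finset.mem_filter, Finset.mem_univ, true_and] at hi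
      by_contra hiΛ
      apply hi
      have hx'i : x' i = 0 := suppF_zero_outside hx'.1 i hiΛ
      simp [hg, restr, hiΛ, hx'i]
    have hle := hx'.2 (x' + t • g) hz
    have hsq : (l2norm (y - Φ.mulVec x')) ^ 2 ≤ (l2norm (y - Φ.mulVec (x' + t • g))) ^ 2 := by
      apply pow_le_pow_left₀ (Real.sqrt_nonneg _) hle
    rw [l2norm_sq, l2norm_sq] at hsq
    have e1 : ∀ i, (y - Φ.mulVec x') i = -A i := by
      intro i
      simp [hy, hA, hh, Matrix.mulVec_sub, Pi.sub_apply]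
    have e2 : ∀ i, (y - Φ.mulVec (x' + t • g)) i = -(A i + t * G i) := by
      intro i
      simp [hy, hA, hG, hh, Matrix.mulVec_sub, Matrix.mulVec_add, Matrix.mulVec_smul,
        Pi.sub_apply, Pi.add_apply, Pi.smul_apply, smul_eq_mul]
      ring
    have hsq2 : ∑ i, (A i) ^ 2 ≤ ∑ i, (A i + t * G i) ^ 2 := by
      calc ∑ i, (A i) ^ 2 = ∑ i, ((y - Φ.mulVec x') i) ^ 2 :=
            Finset.sum_congr rfl fun i _ => by rw [e1]; ring
        _ ≤ ∑ i, ((y - Φ.mulVec (x' + t • g)) i) ^ 2 := hsq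
        _ = ∑ i, (A i + t * G i) ^ 2 :=
            Finset.sum_congr rfl fun i _ => by rw [e2]; ring
    have expand : ∑ i, (A i + t * G i) ^ 2 = ∑ i, (A i)^2 + 2 * t * c + t ^ 2 * d := by
      rw [sum_sq_add' A (fun i => t * G i), hc, hd]
      have e3 : ∑ i, A i * (t * G i) = t * ∑ i, A i * G i := by
        rw [Finset.mul_sum]; exact Finset.sum_congr rfl fun i _ => by ring
      have e4 : ∑ i, (t * G i) ^ 2 = t ^ 2 * ∑ i, (G i) ^ 2 := by
        rw [Finset.mul_sum]; exact Finset.sum_congr rfl fun i _ => by ring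
      rw [e3, e4]; ring
    rw [expand] at hsq2
    linarith
  have hc0 : c = 0 := by
    have h1 := key (-c / (d + 1))
    have hd1 : (0:ℝ) < d + 1 := by linarith
    have h2 : 2 * (-c / (d + 1)) * c + (-c / (d + 1)) ^ 2 * d
        = (-(c ^ 2) * (d + 2)) / (d + 1) ^ 2 := by
      field_simp
      ring
    rw [h2] at h1
    have h3 : 0 * ((d + 1) ^ 2) ≤ -(c ^ 2) * (d + 2) :=
      (le_div_iff₀ (by positivity)).mp h1
    have h4 : c ^ 2 ≤ 0 := by nlinarith
    have h5 : c ^ 2 = 0 := le_antisymm h4 (sq_nonneg c)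
    exact sq_eq_zero_iff.mp h5
  -- main inequality: α ≤ δ² β
  have hmain : α ≤ δ ^ 2 * β := by
    rcases eq_or_lt_of_le hαnn with hα0 | hα0
    · nlinarith
    · set a : ℝ := Real.sqrt α with ha
      set b : ℝ := Real.sqrt β with hb
      have ha2 : a ^ 2 = α := Real.sq_sqrt hαnn
      have hb2 : b ^ 2 = β := Real.sq_sqrt hβnn
      have hapos : 0 < a := Real.sqrt_pos.2 hα0
      have hβpos : 0 < β := by
        have : 0 ≤ γ := Finset.sum_nonneg fun i _ => sq_nonneg _
        linarith [hβsplit]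
      have hbpos : 0 < b := Real.sqrt_pos.2 hβpos
      -- u = b•g, v = a•h
      set u : Fin N → ℝ := fun i => b * g i with hu
      set v : Fin N → ℝ := fun i => a * h i with hv
      have hsupp : ∀ (w : Fin N → ℝ), (∀ i, i ∉ Λ' ∪ suppF x → w i = 0) →
          sparsity w ≤ K' + K := fun w hw =>
        le_trans (sparsity_le_of_zero_outside w _ hw) hcard
      have hgzero : ∀ i, i ∉ Λ' ∪ suppF x → g i = 0 := by
        intro i hi
        rw [Finset.mem_union, not_or] at hi
        simp [hg, restr, hi.1]
      have hsum_sparse : sparsity (fun i => u i + v i) ≤ K' + K := by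
        apply hsupp; intro i hi
        simp [hu, hv, hgzero i hi, hhzero i hi]
      have hdiff_sparse : sparsity (fun i => u i - v i) ≤ K' + K := by
        apply hsupp; intro i hi
        simp [hu, hv, hgzero i hi, hhzero i hi]
      have r1 := (hRIP (fun i => u i + v i) hsum_sparse).1
      have r2 := (hRIP (fun i => u i - v i) hdiff_sparse).2
      rw [l2norm_sq, l2norm_sq] at r1 r2
      -- compute the four sums
      have Puv : ∑ i, (u i + v i) ^ 2 = b^2 * α + 2 * (a * b * α) + a^2 * β := by
        rw [sum_sq_add']
        have e1 : ∑ i, (u i)^2 = b^2 * α := by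
          rw [hα, Finset.mul_sum]; exact Finset.sum_congr rfl fun i _ => by simp [hu]; ring
        have e2 : ∑ i, (v i)^2 = a^2 * β := by
          rw [hβ, Finset.mul_sum]; exact Finset.sum_congr rfl fun i _ => by simp [hv]; ring
        have e3 : ∑ i, u i * v i = a * b * α := by
          rw [← hgh, Finset.mul_sum]; exact Finset.sum_congr rfl fun i _ => by simp [hu, hv]; ring
        rw [e1, e2, e3]
      have Puv' : ∑ i, (u i - v i) ^ 2 = b^2 * α - 2 * (a * b * α) + a^2 * β := by
        rw [sum_sq_sub']
        have e1 : ∑ i, (u i)^2 = b^2 * α := by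
          rw [hα, Finset.mul_sum]; exact Finset.sum_congr rfl fun i _ => by simp [hu]; ring
        have e2 : ∑ i, (v i)^2 = a^2 * β := by
          rw [hβ, Finset.mul_sum]; exact Finset.sum_congr rfl fun i _ => by simp [hv]; ring
        have e3 : ∑ i, u i * v i = a * b * α := by
          rw [← hgh, Finset.mul_sum]; exact Finset.sum_congr rfl fun i _ => by simp [hu, hv]; ring
        rw [e1, e2, e3]
      -- Φ(u±v) pointwise
      have eΦp : ∀ i, Φ.mulVec (fun j => u j + v j) i = b * G i + a * A i := by
        intro i
        have : (fun j => u j + v j) = b • g + a • h := by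
          funext j; simp [hu, hv, Pi.add_apply, Pi.smul_apply, smul_eq_mul]
        rw [this, Matrix.mulVec_add, Matrix.mulVec_smul, Matrix.mulVec_smul]
        simp [hA, hG, Pi.add_apply, Pi.smul_apply, smul_eq_mul]
      have eΦm : ∀ i, Φ.mulVec (fun j => u j - v j) i = b * G i - a * A i := by
        intro i
        have : (fun j => u j - v j) = b • g - a • h := by
          funext j; simp [hu, hv, Pi.sub_apply, Pi.smul_apply, smul_eq_mul]
        rw [this, Matrix.mulVec_sub, Matrix.mulVec_smul, Matrix.mulVec_smul]
        simp [hA, hG, Pi.sub_apply, Pi.smul_apply, smul_eq_mul]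
      have hQ : ∑ i, (Φ.mulVec (fun j => u j + v j) i) ^ 2
          = ∑ i, (Φ.mulVec (fun j => u j - v j) i) ^ 2 := by
        have q1 : ∑ i, (Φ.mulVec (fun j => u j + v j) i) ^ 2
            = b^2 * d + 2 * (a * b * c) + a^2 * ∑ i, (A i)^2 := by
          calc ∑ i, (Φ.mulVec (fun j => u j + v j) i) ^ 2
              = ∑ i, (b^2 * (G i)^2 + (2*a*b) * (A i * G i) + a^2 * (A i)^2) :=
                Finset.sum_congr rfl fun i _ => by rw [eΦp]; ring
            _ = b^2 * d + 2 * (a * b * c) + a^2 * ∑ i, (A i)^2 := by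
                rw [Finset.sum_add_distrib, Finset.sum_add_distrib, ← Finset.mul_sum,
                  ← Finset.mul_sum, ← Finset.mul_sum, ← hc, ← hd]
                ring
        have q2 : ∑ i, (Φ.mulVec (fun j => u j - v j) i) ^ 2
            = b^2 * d - 2 * (a * b * c) + a^2 * ∑ i, (A i)^2 := by
          calc ∑ i, (Φ.mulVec (fun j => u j - v j) i) ^ 2
              = ∑ i, (b^2 * (G i)^2 - (2*a*b) * (A i * G i) + a^2 * (A i)^2) :=
                Finset.sum_congr rfl fun i _ => by rw [eΦm]; ring
            _ = b^2 * d - 2 * (a * b * c) + a^2 * ∑ i, (A i)^2 := by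
                rw [Finset.sum_add_distrib, Finset.sum_sub_distrib, ← Finset.mul_sum,
                  ← Finset.mul_sum, ← Finset.mul_sum, ← hc, ← hd]
                ring
        rw [q1, q2, hc0]; ring
      rw [Puv] at r1
      rw [Puv'] at r2
      rw [hQ] at r1
      -- (1-δ)(b²α + 2a³b + a²β) ≤ (1+δ)(b²α - 2a³b + a²β), with α=a², β=b²
      rw [← ha2, ← hb2] at r1 r2
      have r3 := le_trans r1 r2
      have hkey : a ^ 3 * b ≤ δ * (a^2 * b^2) := by nlinarith [r3]
      have hab : a ≤ δ * b := by
        have h1 : a^2 * b > 0 := by positivity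
        nlinarith [mul_pos (mul_pos hapos hapos) hbpos]
      calc α = a ^ 2 := ha2.symm
        _ ≤ (δ * b) ^ 2 := by nlinarith [hapos.le, mul_nonneg hδ0 hbpos.le]
        _ = δ ^ 2 * β := by rw [← hb2]; ring
  -- conclude
  have hδ2 : 0 < 1 - δ ^ 2 := by nlinarith
  rw [l2norm_sq, l2norm_sq, le_div_iff₀ hδ2]
  have e1 : (∑ i, (h i) ^ 2) = β := rfl
  have e2 : (∑ i, (gc i) ^ 2) = γ := rfl
  rw [e1, e2]
  nlinarith [hβsplit, hmain]
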